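/- Kraft inequality for self-delimiting programs: if S is a set of binary strings (List Bool) that is prefix-free, meaning no element of S is a proper prefix of another element of S, then the sum ∑' (p : S), (2 : ℝ)^(−(p.length : ℤ)) is at most 1. (This is the fact underlying the convergence of the halting probability Ω = ∑ over halting self-delimiting programs p of 2^(−|p|), which as a probability must lie between zero and one.) -/
import Mathlib

noncomputable def valB : List Bool → ℝ
  | [] => 0
  | b :: t => (if b then (1:ℝ) else 0) / 2 + valB t / 2

noncomputable def IB (p : List Bool) : Set ℝ :=
  Set.Ico (valB p) (valB p + (2:ℝ) ^ (-(p.length : ℤ)))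

lemma wsucc (n : ℕ) : (2:ℝ) ^ (-((n+1 : ℕ) : ℤ)) = (2:ℝ) ^ (-(n:ℤ)) / 2 := by
  push_cast
  rw [neg_add, zpow_add₀ (two_ne_zero)]
  norm_num
  ring

lemma wsucc' (n : ℕ) : (2:ℝ) ^ (-1 + -(n:ℤ)) = (2:ℝ) ^ (-(n:ℤ)) / 2 := by
  rw [zpow_add₀ (two_ne_zero)]
  norm_num
  ring

lemma valB_nonneg (p : List Bool) : 0 ≤ valB p := by
  induction p with
  | nil => simp [valB]
  | cons b t ih => by_cases hb : b <;> simp [valB, hb] <;> linarith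

lemma valB_le (p : List Bool) : valB p + (2:ℝ) ^ (-(p.length : ℤ)) ≤ 1 := by
  induction p with
  | nil => simp [valB]
  | cons b t ih =>
    by_cases hb : b <;> simp [valB, hb, List.length_cons] <;>
      linarith [wsucc' t.length]

lemma mem_IB_cons {x : ℝ} {a : Bool} {t : List Bool} :
    x ∈ IB (a :: t) ↔ 2 * x - (if a then (1:ℝ) else 0) ∈ IB t := by
  simp only [IB, valB, Set.mem_Ico, List.length_cons, wsucc]
  constructor <;> intro ⟨h1, h2⟩ <;> constructor <;> linarith

lemma IB_disjoint : ∀ p q : List Bool, ¬ p <+: q → ¬ q <+: p → Disjoint (IB p) (IB q) := by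
  intro p
  induction p with
  | nil => intro q h _; exact absurd List.nil_prefix h
  | cons a p' ih =>
    intro q hpq hqp
    cases q with
    | nil => exact absurd List.nil_prefix hqp
    | cons b q' =>
      by_cases hab : a = b
      · subst hab
        have h1 : ¬ p' <+: q' := fun h => hpq (by simp [List.cons_prefix_cons, h])
        have h2 : ¬ q' <+: p' := fun h => hqp (by simp [List.cons_prefix_cons, h])
        rw [Set.disjoint_left]
        intro x hx1 hx2
        rw [mem_IB_cons] at hx1 hx2
        exact Set.disjoint_left.mp (ih q' h1 h2) hx1 hx2
      · rw [Set.disjoint_left]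
        intro x hx1 hx2
        have k1 := hx1.1; have k2 := hx1.2; have k3 := hx2.1; have k4 := hx2.2
        simp only [IB, valB, Set.mem_Ico, List.length_cons, wsucc] at k1 k2 k3 k4
        have l1 := valB_nonneg p'
        have l2 := valB_le p'
        have l3 := valB_nonneg q'
        have l4 := valB_le q'
        cases a <;> cases b <;> simp_all <;> linarith

lemma IB_subset (p : List Bool) : IB p ⊆ Set.Ico (0:ℝ) 1 := by
  intro x hx
  exact ⟨le_trans (valB_nonneg p) hx.1, lt_of_lt_of_le hx.2 (valB_le p)⟩

lemma kraft_finset (F : Finset (List Bool))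
    (h : ∀ p ∈ F, ∀ q ∈ F, p <+: q → p = q) :
    ∑ p ∈ F, (2:ℝ) ^ (-(p.length : ℤ)) ≤ 1 := by
  have hdisj : (↑F : Set (List Bool)).Pairwise (Function.onFun Disjoint IB) := by
    intro p hp q hq hne
    exact IB_disjoint p q (fun h' => hne (h p (by simpa using hp) q (by simpa using hq) h'))
      (fun h' => hne ((h q (by simpa using hq) p (by simpa using hp) h').symm))
  have hmeas := MeasureTheory.measure_biUnion_finset (μ := MeasureTheory.volume) hdisj
    (fun p _ => measurableSet_Ico (a := valB p) (b := valB p + (2:ℝ) ^ (-(p.length : ℤ))))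
  have hsub : (⋃ p ∈ F, IB p) ⊆ Set.Ico (0:ℝ) 1 := by
    simp only [Set.iUnion_subset_iff]
    exact fun p _ => IB_subset p
  have hle : ∑ p ∈ F, MeasureTheory.volume (IB p) ≤ 1 := by
    rw [← hmeas]
    calc MeasureTheory.volume (⋃ p ∈ F, IB p)
        ≤ MeasureTheory.volume (Set.Ico (0:ℝ) 1) := MeasureTheory.measure_mono hsub
      _ = 1 := by simp [Real.volume_Ico]
  have hvol : ∀ p : List Bool, MeasureTheory.volume (IB p)
      = ENNReal.ofReal ((2:ℝ) ^ (-(p.length : ℤ))) := by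
    intro p; simp [IB, Real.volume_Ico]
  rw [Finset.sum_congr rfl (fun p _ => hvol p),
    ← ENNReal.ofReal_sum_of_nonneg (fun p _ => by positivity)] at hle
  exact (ENNReal.ofReal_le_one).mp hle

/-- Kraft inequality for self-delimiting programs: for a prefix-free set `S` of
binary strings, the sum of `2^(-|p|)` over `p ∈ S` converges and is at most `1`. -/
theorem kraft_inequality (S : Set (List Bool))
    (hpf : ∀ p ∈ S, ∀ q ∈ S, p <+: q → p = q) :
    Summable (fun p : S => (2 : ℝ) ^ (-((p : List Bool).length : ℤ))) ∧
      ∑' p : S, (2 : ℝ) ^ (-((p : List Bool).length : ℤ)) ≤ 1 := by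
  have hb : ∀ u : Finset S, ∑ p ∈ u, (2 : ℝ) ^ (-((p : List Bool).length : ℤ)) ≤ 1 := by
    intro u
    have key : ∑ q ∈ u.image Subtype.val, (2:ℝ) ^ (-(q.length : ℤ))
        = ∑ p ∈ u, (2:ℝ) ^ (-((p : List Bool).length : ℤ)) :=
      Finset.sum_image (fun a _ b _ h => Subtype.ext h)
    rw [← key]
    exact kraft_finset _ (fun p hp q hq hpre => by
      simp only [Finset.mem_image] at hp hq
      obtain ⟨p', _, rfl⟩ := hp
      obtain ⟨q', _, rfl⟩ := hq
      exact hpf p' p'.2 q' q'.2 hpre)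
  have hs : Summable (fun p : S => (2 : ℝ) ^ (-((p : List Bool).length : ℤ))) :=
    summable_of_sum_le (fun p => by positivity) hb
  exact ⟨hs, Summable.tsum_le_of_sum_le hs hb⟩
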